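/- For each $j$ with $0 \le j \le N-2$, the function $u_j^{N,k}(x) := \frac{1}{j!}(\partial_z)^j\left(e^{zx}\phi^{N,k}(x,z)\right)\big|_{z=0}$ satisfies the ordinary differential equation $\left((\partial_x)^{N-1} - k e^x (k\partial_x + k-1)\cdots(k\partial_x + 1)\right)u_j^{N,k}(x) = 0$. -/

import Mathlib

/-- The model for functions `∑_d e^{dx} p_d(x)` (`p_d` polynomial): formal power series in
`q = eˣ` with coefficients polynomials in `x`. -/
noncomputable abbrev GFun : Type := PowerSeries (Polynomial ℚ)

/-- The derivative `∂ₓ` on `∑_d e^{dx} p_d(x)`: `(∂ₓ f)_d = d·p_d + p_d'`. -/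
noncomputable def Dop : GFun → GFun := fun f =>
  PowerSeries.mk fun d =>
    (d : Polynomial ℚ) * PowerSeries.coeff d f +
      Polynomial.derivative (PowerSeries.coeff d f)

/-- The operator `∏_{m=1}^{M} (k ∂ₓ + m)` (the factors commute, applied in order). -/
noncomputable def opProd (k : ℕ) : ℕ → GFun → GFun
  | 0 => id
  | M + 1 => fun f => k • Dop (opProd k M f) + (M + 1) • opProd k M f

/-- The coefficients `φ_d^{N,k}(z)` as power series in `z` (regular at `z = 0`). -/
noncomputable def phiPS (N k d : ℕ) : PowerSeries ℚ :=
  PowerSeries.C (((k * d).factorial : ℚ) / ((d.factorial : ℚ)) ^ N) *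
    (∏ i ∈ Finset.Icc 1 (k * d), (1 + PowerSeries.C ((k : ℚ) / (i : ℚ)) * PowerSeries.X)) *
    ((∏ i ∈ Finset.Icc 1 d, (1 + PowerSeries.C ((1 : ℚ) / (i : ℚ)) * PowerSeries.X)) ^ N)⁻¹

/-- `u_j^{N,k}(x) = (1/j!) (∂_z)^j (e^{zx} φ^{N,k}(x,z))|_{z=0}`: the coefficient of `e^{dx}`
is `∑_{a+b=j} (x^a/a!) ⬝ (coefficient of z^b in φ_d^{N,k})`. -/
noncomputable def uSol (N k j : ℕ) : GFun :=
  PowerSeries.mk fun d =>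
    ∑ a ∈ Finset.range (j + 1),
      Polynomial.C ((1 / (a.factorial : ℚ)) * PowerSeries.coeff (j - a) (phiPS N k d)) *
        Polynomial.X ^ a

/-- For `0 ≤ j ≤ N-2`, the function `u_j^{N,k}` satisfies the Givental ODE
`((∂ₓ)^{N-1} - k eˣ (k∂ₓ+k-1)⋯(k∂ₓ+1)) u_j = 0`. -/


noncomputable def Emap (j : ℕ) (ψ : PowerSeries ℚ) : Polynomial ℚ :=
  ∑ a ∈ Finset.range (j + 1),
    Polynomial.C ((1 / (a.factorial : ℚ)) * PowerSeries.coeff (j - a) ψ) * Polynomial.X ^ a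

lemma Emap_coeff (j : ℕ) (ψ : PowerSeries ℚ) (n : ℕ) :
    (Emap j ψ).coeff n =
      if n ≤ j then (1 / (n.factorial : ℚ)) * PowerSeries.coeff (j - n) ψ else 0 := by
  rw [Emap, Polynomial.finset_sum_coeff]
  simp only [Polynomial.coeff_C_mul, Polynomial.coeff_X_pow, mul_ite, mul_one, mul_zero]
  rw [Finset.sum_ite_eq (Finset.range (j+1)) n]
  simp [Nat.lt_succ_iff]

lemma Emap_add (j : ℕ) (ψ χ : PowerSeries ℚ) : Emap j (ψ + χ) = Emap j ψ + Emap j χ := by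
  ext n
  simp only [Emap_coeff, Polynomial.coeff_add, map_add]
  split <;> ring

lemma Emap_Cmul (j : ℕ) (c : ℚ) (ψ : PowerSeries ℚ) :
    Emap j (PowerSeries.C c * ψ) = Polynomial.C c * Emap j ψ := by
  ext n
  simp only [Emap_coeff, Polynomial.coeff_C_mul, PowerSeries.coeff_C_mul]
  split <;> ring

noncomputable def Lop (d : ℕ) (p : Polynomial ℚ) : Polynomial ℚ :=
  (d : Polynomial ℚ) * p + Polynomial.derivative p

lemma Lop_Emap (d j : ℕ) (ψ : PowerSeries ℚ) :
    Lop d (Emap j ψ) = Emap j ((PowerSeries.C (d : ℚ) + PowerSeries.X) * ψ) := by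
  ext n
  rw [Lop]
  simp only [Polynomial.coeff_add, Polynomial.coeff_natCast_mul, Polynomial.coeff_derivative,
    Emap_coeff, add_mul, PowerSeries.coeff_C_mul, map_add]
  split_ifs with h1 h2 h3
  · rw [show j - n = (j-n-1)+1 by omega, PowerSeries.coeff_succ_X_mul,
      show j-(n+1) = j-n-1 by omega]
    have hf : ((n+1).factorial : ℚ) = (n+1) * n.factorial := by
      rw [Nat.factorial_succ]; push_cast; ring
    rw [hf]
    have hn : (n.factorial : ℚ) ≠ 0 := Nat.cast_ne_zero.mpr (Nat.factorial_ne_zero n)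
    have hn1 : ((n:ℚ)+1) ≠ 0 := by positivity
    field_simp
  · rw [show j - n = 0 by omega, PowerSeries.coeff_zero_X_mul]
    ring
  · omega
  · ring

lemma coeff_Dop (f : GFun) (d : ℕ) :
    PowerSeries.coeff d (Dop f) = Lop d (PowerSeries.coeff d f) := by
  simp [Dop, Lop, PowerSeries.coeff_mk]

lemma Emap_nsmul (j m : ℕ) (ψ : PowerSeries ℚ) :
    m • Emap j ψ = Emap j (PowerSeries.C (m : ℚ) * ψ) := by
  rw [Emap_Cmul, nsmul_eq_mul, map_natCast]

lemma coeff_Dop_iter (n : ℕ) (f : GFun) (d : ℕ) :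
    PowerSeries.coeff d (Dop^[n] f) = (Lop d)^[n] (PowerSeries.coeff d f) := by
  induction n generalizing f with
  | zero => rfl
  | succ n ih =>
    rw [Function.iterate_succ_apply, Function.iterate_succ_apply, ih, coeff_Dop]

lemma Lop_iter_Emap (d j n : ℕ) (ψ : PowerSeries ℚ) :
    (Lop d)^[n] (Emap j ψ) = Emap j ((PowerSeries.C (d : ℚ) + PowerSeries.X) ^ n * ψ) := by
  induction n with
  | zero => simp
  | succ n ih =>
    rw [Function.iterate_succ_apply', ih, Lop_Emap, ← mul_assoc, ← pow_succ']

lemma coeff_opProd (k M : ℕ) (f : GFun) (d j : ℕ) (ψ : PowerSeries ℚ)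
    (hf : PowerSeries.coeff d f = Emap j ψ) :
    PowerSeries.coeff d (opProd k M f) =
      Emap j ((∏ m ∈ Finset.Icc 1 M,
        (PowerSeries.C ((k : ℚ) * d + m) + PowerSeries.C (k : ℚ) * PowerSeries.X)) * ψ) := by
  induction M with
  | zero => simpa [opProd] using hf
  | succ M ih =>
    have : opProd k (M+1) f = k • Dop (opProd k M f) + (M + 1) • opProd k M f := rfl
    rw [this, map_add, map_nsmul, map_nsmul, coeff_Dop, ih, Lop_Emap, Emap_nsmul, Emap_nsmul,
      ← Emap_add]
    congr 1
    rw [Finset.prod_Icc_succ_top (by omega),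
      show (PowerSeries.C) ((k:ℚ)*d + ((M+1:ℕ):ℚ)) =
        PowerSeries.C (k:ℚ) * PowerSeries.C (d:ℚ) + PowerSeries.C ((M+1:ℕ):ℚ) from by
          rw [map_add, map_mul]]
    ring

noncomputable def Bf (d : ℕ) : PowerSeries ℚ :=
  ∏ i ∈ Finset.Icc 1 d, (1 + PowerSeries.C ((1:ℚ)/(i:ℚ)) * PowerSeries.X)

noncomputable def Af (k d : ℕ) : PowerSeries ℚ :=
  ∏ i ∈ Finset.Icc 1 (k*d), (1 + PowerSeries.C ((k:ℚ)/(i:ℚ)) * PowerSeries.X)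

lemma phiPS_eq (N k d : ℕ) :
    phiPS N k d = PowerSeries.C (((k*d).factorial : ℚ)/((d.factorial:ℚ))^N) *
      Af k d * ((Bf d)^N)⁻¹ := rfl

lemma constCoeff_Bf (d : ℕ) : PowerSeries.constantCoeff (Bf d) = 1 := by
  rw [Bf, map_prod]
  simp

lemma Icc_one (m : ℕ) : Finset.Icc 1 m = Finset.Ioc 0 m := by
  ext x; simp [Finset.mem_Icc, Finset.mem_Ioc]; omega

lemma prodIoc (a b : ℕ) (hab : a ≤ b) :
    ∏ i ∈ Finset.Ioc a b, (i:ℚ) = (b.factorial : ℚ) / (a.factorial : ℚ) := by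
  induction b, hab using Nat.le_induction with
  | base => rw [Finset.Ioc_self, Finset.prod_empty, div_self
      (Nat.cast_ne_zero.mpr (Nat.factorial_ne_zero a))]
  | succ b hab ih =>
    rw [Finset.prod_Ioc_succ_top hab, ih, Nat.factorial_succ]
    have h1 : ((b.factorial : ℚ)) ≠ 0 := Nat.cast_ne_zero.mpr (Nat.factorial_ne_zero b)
    have h2 : ((a.factorial : ℚ)) ≠ 0 := Nat.cast_ne_zero.mpr (Nat.factorial_ne_zero a)
    field_simp
    push_cast
    ring

lemma key (N k e : ℕ) (hk : 1 ≤ k) (hN : 1 ≤ N) :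
    (PowerSeries.C ((e:ℚ)+1) + PowerSeries.X) ^ (N-1) * phiPS N k (e+1)
      = PowerSeries.C (k:ℚ) *
        ((∏ m ∈ Finset.Icc 1 (k-1),
          (PowerSeries.C ((k:ℚ)*e + (m:ℚ)) + PowerSeries.C (k:ℚ) * PowerSeries.X)) *
          phiPS N k e) := by
  obtain ⟨n, rfl⟩ : ∃ n, N = n + 1 := ⟨N-1, by omega⟩
  simp only [Nat.add_sub_cancel]
  set d1 : ℚ := (e:ℚ) + 1 with hd1
  have hd1ne : d1 ≠ 0 := by positivity
  -- split of B
  have hBu : Bf (e+1) = Bf e *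
      (PowerSeries.C d1⁻¹ * (PowerSeries.C d1 + PowerSeries.X)) := by
    rw [Bf, Bf, Finset.prod_Icc_succ_top (by omega)]
    congr 1
    have h5 : (1:ℚ)/(((e+1:ℕ)):ℚ) = d1⁻¹ := by rw [hd1]; push_cast; rw [one_div]
    rw [h5, mul_add, ← map_mul, inv_mul_cancel₀ hd1ne, map_one]
  -- split of A
  have hA : Af k (e+1) = Af k e *
      ∏ i ∈ Finset.Ioc (k*e) (k*(e+1)),
        (1 + PowerSeries.C ((k:ℚ)/(i:ℚ)) * PowerSeries.X) := by
    rw [Af, Af, Icc_one, Icc_one,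
      ← Finset.prod_Ioc_consecutive _ (Nat.zero_le (k*e)) (Nat.mul_le_mul le_rfl (Nat.le_succ e) : k*e ≤ k*(e+1))]
  -- normalize factors
  have hfac : ∏ i ∈ Finset.Ioc (k*e) (k*(e+1)),
        (1 + PowerSeries.C ((k:ℚ)/(i:ℚ)) * PowerSeries.X)
      = PowerSeries.C (∏ i ∈ Finset.Ioc (k*e) (k*(e+1)), ((i:ℚ))⁻¹) *
        ∏ i ∈ Finset.Ioc (k*e) (k*(e+1)),
          (PowerSeries.C (i:ℚ) + PowerSeries.C (k:ℚ) * PowerSeries.X) := by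
    rw [map_prod, ← Finset.prod_mul_distrib]
    apply Finset.prod_congr rfl
    intro i hi
    have hi1 : 1 ≤ i := by simp only [Finset.mem_Ioc] at hi; omega
    have hine : ((i:ℚ)) ≠ 0 := Nat.cast_ne_zero.mpr (by omega)
    rw [mul_add, ← map_mul, inv_mul_cancel₀ hine, map_one, div_eq_mul_inv,
      mul_comm ((k:ℚ)), ← mul_assoc, ← map_mul]
  -- reindex
  have hre : ∏ i ∈ Finset.Ioc (k*e) (k*(e+1)),
        (PowerSeries.C (i:ℚ) + PowerSeries.C (k:ℚ) * PowerSeries.X)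
      = ∏ m ∈ Finset.Icc 1 k,
        (PowerSeries.C ((k:ℚ)*e + (m:ℚ)) + PowerSeries.C (k:ℚ) * PowerSeries.X) := by
    rw [Icc_one, show k*(e+1) = k*e + k by ring,
      show Finset.Ioc (k*e) (k*e+k) = Finset.map (addLeftEmbedding (k*e)) (Finset.Ioc 0 k) from by
        rw [Finset.map_add_left_Ioc]; simp,
      Finset.prod_map]
    apply Finset.prod_congr rfl
    intro m hm
    simp only [addLeftEmbedding_apply]
    push_cast
    ring_nf
  -- split top factor
  have hsplit2 : ∏ m ∈ Finset.Icc 1 k,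
        (PowerSeries.C ((k:ℚ)*e + (m:ℚ)) + PowerSeries.C (k:ℚ) * PowerSeries.X)
      = (PowerSeries.C (k:ℚ) * (PowerSeries.C d1 + PowerSeries.X)) *
        ∏ m ∈ Finset.Icc 1 (k-1),
          (PowerSeries.C ((k:ℚ)*e + (m:ℚ)) + PowerSeries.C (k:ℚ) * PowerSeries.X) := by
    obtain ⟨k', rfl⟩ : ∃ k', k = k' + 1 := ⟨k-1, by omega⟩
    rw [Finset.prod_Icc_succ_top (by omega), Nat.add_sub_cancel, mul_comm]
    congr 1
    have : ((k'+1:ℕ):ℚ)*e + ((k'+1:ℕ):ℚ) = ((k'+1:ℕ):ℚ) * d1 := by rw [hd1]; push_cast; ring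
    rw [this, map_mul, mul_add]
  -- scalar identity
  have hscal : PowerSeries.C (((k*(e+1)).factorial:ℚ)/(((e+1).factorial:ℚ))^(n+1)) *
        PowerSeries.C (∏ i ∈ Finset.Ioc (k*e) (k*(e+1)), ((i:ℚ))⁻¹)
      = PowerSeries.C (((k*e).factorial:ℚ)/(((e).factorial:ℚ))^(n+1)) *
        (PowerSeries.C d1⁻¹)^(n+1) := by
    rw [← map_pow, ← map_mul, ← map_mul]
    congr 1
    rw [Finset.prod_inv_distrib, prodIoc _ _ (Nat.mul_le_mul le_rfl (Nat.le_succ e) : k*e ≤ k*(e+1))]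
    have h1 : (((k*(e+1)).factorial:ℚ)) ≠ 0 := Nat.cast_ne_zero.mpr (Nat.factorial_ne_zero _)
    have h2 : (((k*e).factorial:ℚ)) ≠ 0 := Nat.cast_ne_zero.mpr (Nat.factorial_ne_zero _)
    have h3 : ((e.factorial:ℚ)) ≠ 0 := Nat.cast_ne_zero.mpr (Nat.factorial_ne_zero _)
    have h4 : (((e+1).factorial:ℚ)) = d1 * (e.factorial:ℚ) := by
      rw [Nat.factorial_succ, hd1]; push_cast; ring
    rw [h4, mul_pow, inv_pow, inv_div]
    have h5 : (d1^(n+1)) ≠ 0 := pow_ne_zero _ hd1ne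
    have h6 : ((e.factorial:ℚ))^(n+1) ≠ 0 := pow_ne_zero _ h3
    field_simp
  -- units
  have hcc : PowerSeries.constantCoeff ((Bf (e+1))^(n+1)) ≠ 0 := by
    rw [map_pow, constCoeff_Bf]; simp
  have hcc0 : PowerSeries.constantCoeff ((Bf e)^(n+1)) ≠ 0 := by
    rw [map_pow, constCoeff_Bf]; simp
  have hB1inv : ((Bf (e+1))^(n+1))⁻¹ * (Bf (e+1))^(n+1) = 1 :=
    PowerSeries.inv_mul_cancel _ hcc
  have hB0inv : ((Bf e)^(n+1))⁻¹ * (Bf e)^(n+1) = 1 :=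
    PowerSeries.inv_mul_cancel _ hcc0
  have hne : ((Bf (e+1))^(n+1)) ≠ 0 := fun h => hcc (by rw [h, map_zero])
  apply mul_right_cancel₀ hne
  rw [phiPS_eq, phiPS_eq, hA, hfac, hre, hsplit2]
  rw [hBu, mul_pow, mul_pow] at hB1inv ⊢
  linear_combination
    ((PowerSeries.C d1 + PowerSeries.X)^n *
      PowerSeries.C (((k*(e+1)).factorial:ℚ)/(((e+1).factorial:ℚ))^(n+1)) *
      Af k e *
      PowerSeries.C (∏ i ∈ Finset.Ioc (k*e) (k*(e+1)), ((i:ℚ))⁻¹) *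
      (PowerSeries.C (k:ℚ) * (PowerSeries.C d1 + PowerSeries.X)) *
      (∏ m ∈ Finset.Icc 1 (k-1),
        (PowerSeries.C ((k:ℚ)*e + (m:ℚ)) + PowerSeries.C (k:ℚ) * PowerSeries.X))) * hB1inv
    - (PowerSeries.C (k:ℚ) *
      (∏ m ∈ Finset.Icc 1 (k-1),
        (PowerSeries.C ((k:ℚ)*e + (m:ℚ)) + PowerSeries.C (k:ℚ) * PowerSeries.X)) *
      PowerSeries.C (((k*e).factorial:ℚ)/(((e).factorial:ℚ))^(n+1)) *
      Af k e * ((PowerSeries.C d1⁻¹)^(n+1) * (PowerSeries.C d1 + PowerSeries.X)^(n+1))) * hB0inv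
    + ((PowerSeries.C d1 + PowerSeries.X)^(n+1) * PowerSeries.C (k:ℚ) *
      (∏ m ∈ Finset.Icc 1 (k-1),
        (PowerSeries.C ((k:ℚ)*e + (m:ℚ)) + PowerSeries.C (k:ℚ) * PowerSeries.X)) *
      Af k e) * hscal

lemma coeff_uSol (N k j d : ℕ) :
    PowerSeries.coeff d (uSol N k j) = Emap j (phiPS N k d) := by
  simp [uSol, Emap, PowerSeries.coeff_mk]

lemma Emap_vanish (j p : ℕ) (ψ : PowerSeries ℚ) (h : j < p) :
    Emap j (PowerSeries.X ^ p * ψ) = 0 := by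
  ext n
  rw [Emap_coeff, Polynomial.coeff_zero]
  split
  · rw [PowerSeries.X_pow_dvd_iff.mp ⟨ψ, rfl⟩ (j - n) (by omega), mul_zero]
  · rfl

theorem stmt_1 (N k : ℕ) (hN : 2 ≤ N) (hk : 1 ≤ k) (j : ℕ) (hj : j ≤ N - 2) :
    Dop^[N - 1] (uSol N k j) -
      k • (PowerSeries.X * opProd k (k - 1) (uSol N k j)) = 0 := by
  rw [sub_eq_zero]
  refine PowerSeries.ext fun d => ?_
  rw [coeff_Dop_iter, coeff_uSol, Lop_iter_Emap, map_nsmul]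
  cases d with
  | zero =>
    rw [PowerSeries.coeff_zero_X_mul, smul_zero, Nat.cast_zero, map_zero, zero_add]
    exact Emap_vanish j (N-1) _ (by omega)
  | succ e =>
    rw [PowerSeries.coeff_succ_X_mul,
      coeff_opProd k (k-1) _ e j (phiPS N k e) (coeff_uSol N k j e),
      Emap_nsmul, Nat.cast_succ, key N k e hk (by omega)]
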